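/- Let θ₁,…,θ_m ∈ 𝕋, τ₁,…,τ_m ∈ (0,1], τ_min = min τ_ℓ, and let α be irrational with denominators q_n. Suppose for a given n: ∏_{ℓ=1}^m ‖q_n(θ − θ_ℓ)‖^{τ_ℓ} > e^{q_n(δ − ε/4)}/q_{n+1}^{τ_min} for some δ > 0 and 0 < ε < δ, and suppose q_n is large enough that ‖q_n(θ−θ_ℓ)‖ ≥ 2 q_n/q_{n+1} for all ℓ and q_n^{∑τ_ℓ} ≤ e^{q_n ε/4}. If j_ℓ ∈ [0, q_n) minimizes |sin π(θ − θ_ℓ + jα)| over 0 ≤ j < q_n, then ∏_{ℓ=1}^m |sin π(θ − θ_ℓ + j_ℓ α)|^{τ_ℓ} ≥ e^{q_n(δ − ε/2)}/q_{n+1}^{τ_min}. -/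

import Mathlib

open Real

theorem myaux_notterm (α : ℝ) (hα : Irrational α) (n : ℕ) :
    ¬(GenContFract.of α).TerminatedAt n := by
  intro h
  have : (GenContFract.of α).Terminates := ⟨n, h⟩
  rw [GenContFract.terminates_iff_rat] at this
  obtain ⟨q, hq⟩ := this
  exact hα ⟨q, hq.symm⟩

theorem myaux_int (α : ℝ) (hα : Irrational α) :
    ∀ n : ℕ, (∃ A : ℤ, ((GenContFract.of α).contsAux n).a = A) ∧
      (∃ B : ℤ, ((GenContFract.of α).contsAux n).b = B)
  | 0 => ⟨⟨1, by simp [GenContFract.zeroth_contAux_eq_one_zero]⟩,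
          ⟨0, by simp [GenContFract.zeroth_contAux_eq_one_zero]⟩⟩
  | 1 => ⟨⟨⌊α⌋, by simp [GenContFract.first_contAux_eq_h_one, GenContFract.of_h_eq_floor]⟩,
          ⟨1, by simp [GenContFract.first_contAux_eq_h_one]⟩⟩
  | (n + 2) => by
    obtain ⟨⟨A, hA⟩, ⟨B, hB⟩⟩ := myaux_int α hα n
    obtain ⟨⟨A', hA'⟩, ⟨B', hB'⟩⟩ := myaux_int α hα (n + 1)
    have hnt := myaux_notterm α hα n
    rw [GenContFract.terminatedAt_iff_s_none] at hnt
    obtain ⟨gp, hgp⟩ := Option.ne_none_iff_exists'.1 hnt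
    have ha1 : gp.a = 1 := GenContFract.of_partNum_eq_one (GenContFract.partNum_eq_s_a hgp)
    obtain ⟨z, hz⟩ := GenContFract.exists_int_eq_of_partDen (GenContFract.partDen_eq_s_b hgp)
    have hrec : (GenContFract.of α).contsAux (n + 2) =
        GenContFract.nextConts gp.a gp.b ((GenContFract.of α).contsAux n)
          ((GenContFract.of α).contsAux (n + 1)) := by
      simp [GenContFract.contsAux, hgp]
    constructor
    · exact ⟨z * A' + A, by
        simp [hrec, GenContFract.nextConts, GenContFract.nextNum, ha1, hz, hA, hA']⟩
    · exact ⟨z * B' + B, by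
        simp [hrec, GenContFract.nextConts, GenContFract.nextDen, ha1, hz, hB, hB']⟩

theorem myaux_dens_ge_one (α : ℝ) (n : ℕ) : (1 : ℝ) ≤ (GenContFract.of α).dens n := by
  induction n with
  | zero => simp [GenContFract.zeroth_den_eq_one]
  | succ k ih => exact ih.trans GenContFract.of_den_mono

theorem myaux_abs_add_lower (a b : ℝ) : |a| - |b| ≤ |a + b| := by
  have := abs_add_le (a + b) (-b); simpa using this

theorem myaux_sin (y : ℝ) : 2 * |y - round y| ≤ |Real.sin (π * y)| := by
  have h2 : |π * (y - round y)| ≤ π / 2 := by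
    rw [abs_mul, abs_of_pos Real.pi_pos]
    nlinarith [abs_sub_round y, Real.pi_pos]
  have h3 := Real.mul_abs_le_abs_sin h2
  have h4 := Real.sin_add_int_mul_pi (π * (y - round y)) (round y)
  rw [show π * (y - (round y : ℝ)) + (round y : ℝ) * π = π * y from by ring] at h4
  have h5 : |((-1:ℝ)) ^ round y| = 1 := by
    rcases Int.even_or_odd (round y) with h | h
    · rw [h.neg_one_zpow]; norm_num
    · rw [Odd.neg_one_zpow h]; norm_num
  rw [h4, abs_mul, h5, one_mul]
  calc 2 * |y - round y| = 2 / π * |π * (y - round y)| := by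
        rw [abs_mul, abs_of_pos Real.pi_pos]; field_simp
    _ ≤ _ := h3

/-- Lemma 3.1 of the paper: lower bound on the product of the minimal sine values. -/
theorem stmt15 (α : ℝ) (hα : Irrational α) (m : ℕ) (hm : 0 < m)
    (θl : Fin m → ℝ) (τ : Fin m → ℝ) (hτ : ∀ ℓ, τ ℓ ∈ Set.Ioc (0:ℝ) 1)
    (τmin : ℝ) (hτmin : ∀ ℓ, τmin ≤ τ ℓ) (hτmin' : ∃ ℓ, τ ℓ = τmin)
    (θ δ ε : ℝ) (hδ : 0 < δ) (hε : 0 < ε) (hεδ : ε < δ)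
    (n : ℕ) (qn qn1 : ℝ)
    (hqn : qn = (GenContFract.of α).dens n) (hqn1 : qn1 = (GenContFract.of α).dens (n + 1))
    (hprod : ∏ ℓ, |qn * (θ - θl ℓ) - round (qn * (θ - θl ℓ))| ^ τ ℓ
        > Real.exp (qn * (δ - ε / 4)) / qn1 ^ τmin)
    (hlarge1 : ∀ ℓ, |qn * (θ - θl ℓ) - round (qn * (θ - θl ℓ))| ≥ 2 * qn / qn1)
    (hlarge2 : qn ^ (∑ ℓ, τ ℓ) ≤ Real.exp (qn * ε / 4))
    (j : Fin m → ℕ) (hj : ∀ ℓ, (j ℓ : ℝ) < qn)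
    (hjmin : ∀ ℓ, ∀ i : ℕ, (i : ℝ) < qn →
      |Real.sin (π * (θ - θl ℓ + j ℓ * α))| ≤ |Real.sin (π * (θ - θl ℓ + i * α))|) :
    ∏ ℓ, |Real.sin (π * (θ - θl ℓ + j ℓ * α))| ^ τ ℓ
      ≥ Real.exp (qn * (δ - ε / 2)) / qn1 ^ τmin := by
  have hqn_ge1 : (1 : ℝ) ≤ qn := hqn ▸ myaux_dens_ge_one α n
  have hqn1_ge1 : (1 : ℝ) ≤ qn1 := hqn1 ▸ myaux_dens_ge_one α (n + 1)
  have hqn_pos : (0 : ℝ) < qn := lt_of_lt_of_le one_pos hqn_ge1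
  have hqn1_pos : (0 : ℝ) < qn1 := lt_of_lt_of_le one_pos hqn1_ge1
  -- qn is an integer
  obtain ⟨Q, hQ⟩ : ∃ Q : ℤ, qn = (Q : ℝ) := by
    obtain ⟨B, hB⟩ := (myaux_int α hα (n + 1)).2
    exact ⟨B, by rw [hqn, GenContFract.den_eq_conts_b,
      GenContFract.nth_cont_eq_succ_nth_contAux, hB]⟩
  -- the numerator is an integer
  obtain ⟨N, hN⟩ : ∃ N : ℤ, (GenContFract.of α).nums n = (N : ℝ) := by
    obtain ⟨A, hA⟩ := (myaux_int α hα (n + 1)).1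
    exact ⟨A, by rw [GenContFract.num_eq_conts_a,
      GenContFract.nth_cont_eq_succ_nth_contAux, hA]⟩
  -- ‖qn α‖ ≤ 1 / qn1
  have happrox : |α - (GenContFract.of α).convs n| ≤ 1 / (qn * qn1) := by
    rw [hqn, hqn1]
    exact GenContFract.abs_sub_convs_le (myaux_notterm α hα n)
  have hconv : (GenContFract.of α).convs n = (N : ℝ) / qn := by
    rw [GenContFract.conv_eq_num_div_den, hN, hqn]
  have hqα : |qn * α - (N : ℝ)| ≤ 1 / qn1 := by
    have h0 : qn * α - (N : ℝ) = qn * (α - (GenContFract.of α).convs n) := by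
      rw [hconv]; field_simp
    rw [h0, abs_mul, abs_of_pos hqn_pos]
    calc qn * |α - (GenContFract.of α).convs n| ≤ qn * (1 / (qn * qn1)) :=
          mul_le_mul_of_nonneg_left happrox hqn_pos.le
      _ = 1 / qn1 := by field_simp
  have he : |qn * α - round (qn * α)| ≤ 1 / qn1 := (round_le (qn * α) N).trans hqα
  -- pointwise bound on each sine factor
  have key : ∀ ℓ, |qn * (θ - θl ℓ) - round (qn * (θ - θl ℓ))| / qn
      ≤ |Real.sin (π * (θ - θl ℓ + j ℓ * α))| := by
    intro ℓ
    set x : ℝ := θ - θl ℓ with hx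
    set d : ℝ := qn * x - round (qn * x) with hd
    set e : ℝ := qn * α - round (qn * α) with hee
    set y : ℝ := x + j ℓ * α with hy
    have hd2 : |d| ≤ 1 / 2 := by rw [hd]; exact abs_sub_round (qn * x)
    have hdl : 2 * qn / qn1 ≤ |d| := hlarge1 ℓ
    have hke : (j ℓ : ℝ) * |e| ≤ qn / qn1 := by
      calc (j ℓ : ℝ) * |e| ≤ qn * (1 / qn1) :=
            mul_le_mul (hj ℓ).le he (abs_nonneg _) hqn_pos.le
        _ = qn / qn1 := by ring
    have hke' : (j ℓ : ℝ) * |e| ≤ |d| / 2 := by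
      have h6 : 2 * qn ≤ |d| * qn1 := (div_le_iff₀ hqn1_pos).1 hdl
      have h7 : qn / qn1 ≤ |d| / 2 := by
        rw [div_le_div_iff₀ hqn1_pos two_pos]; linarith
      linarith
    have hkenn : (0:ℝ) ≤ (j ℓ : ℝ) * |e| := by positivity
    -- lower bound on distance of qn*y to any integer
    have stepA : ∀ t : ℤ, |d| / 2 ≤ |qn * y - (t : ℝ)| := by
      intro t
      have hyd : qn * y - (t : ℝ) = (d + (j ℓ : ℝ) * e)
          + (-(t - round (qn * x) - (j ℓ : ℤ) * round (qn * α) : ℤ) : ℝ) := by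
        push_cast
        rw [hy, hd, hee]
        ring
      set u : ℤ := t - round (qn * x) - (j ℓ : ℤ) * round (qn * α) with hu
      have hje : |(j ℓ : ℝ) * e| = (j ℓ : ℝ) * |e| := by
        rw [abs_mul, Nat.abs_cast]
      rw [hyd]
      rcases eq_or_ne u 0 with h0 | h0
      · rw [h0]
        have h8 := myaux_abs_add_lower d ((j ℓ : ℝ) * e)
        rw [hje] at h8
        simp only [Int.cast_zero, neg_zero, add_zero]
        linarith
      · have hu1 : (1 : ℝ) ≤ |(-u : ℤ)| := by
          have : (1:ℤ) ≤ |(-u)| := Int.one_le_abs (neg_ne_zero.2 h0)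
          exact_mod_cast this
        have h8 := myaux_abs_add_lower ((-u : ℤ) : ℝ) (d + (j ℓ : ℝ) * e)
        rw [show (((-u : ℤ)) : ℝ) + (d + (j ℓ : ℝ) * e) = (d + (j ℓ : ℝ) * e) + ((-u : ℤ) : ℝ)
          from by ring] at h8
        have h9 : |d + (j ℓ : ℝ) * e| ≤ |d| + (j ℓ : ℝ) * |e| := by
          calc |d + (j ℓ : ℝ) * e| ≤ |d| + |(j ℓ : ℝ) * e| := abs_add_le _ _
            _ = |d| + (j ℓ : ℝ) * |e| := by rw [hje]
        push_cast at hu1 h8 ⊢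
        linarith
    -- from distance bound to a bound on ‖y‖
    have stepB : |d| ≤ |y - round y| * (2 * qn) := by
      have h1 := stepA (Q * round y)
      have h2 : qn * y - ((Q * round y : ℤ) : ℝ) = qn * (y - round y) := by
        push_cast [hQ]; ring
      rw [h2, abs_mul, abs_of_pos hqn_pos] at h1
      nlinarith
    have hsiny := myaux_sin y
    calc |d| / qn ≤ 2 * |y - round y| := by
          rw [div_le_iff₀ hqn_pos]; nlinarith
      _ ≤ |Real.sin (π * y)| := hsiny
  -- assemble the product
  have step1 : ∏ ℓ, (|qn * (θ - θl ℓ) - round (qn * (θ - θl ℓ))| / qn) ^ τ ℓ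
      ≤ ∏ ℓ, |Real.sin (π * (θ - θl ℓ + j ℓ * α))| ^ τ ℓ := by
    apply Finset.prod_le_prod
    · intro ℓ _; exact Real.rpow_nonneg (by positivity) _
    · intro ℓ _; exact Real.rpow_le_rpow (by positivity) (key ℓ) (hτ ℓ).1.le
  have step2 : ∏ ℓ, (|qn * (θ - θl ℓ) - round (qn * (θ - θl ℓ))| / qn) ^ τ ℓ
      = (∏ ℓ, |qn * (θ - θl ℓ) - round (qn * (θ - θl ℓ))| ^ τ ℓ) / qn ^ (∑ ℓ, τ ℓ) := by
    rw [Real.rpow_sum_of_pos hqn_pos, ← Finset.prod_div_distrib]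
    exact Finset.prod_congr rfl fun ℓ _ => Real.div_rpow (abs_nonneg _) hqn_pos.le _
  have hK : (0:ℝ) < qn1 ^ τmin := Real.rpow_pos_of_pos hqn1_pos _
  have hE1 : (0:ℝ) < Real.exp (qn * (δ - ε / 4)) / qn1 ^ τmin := by positivity
  have hS : (0:ℝ) < qn ^ (∑ ℓ, τ ℓ) := Real.rpow_pos_of_pos hqn_pos _
  have step3 : (Real.exp (qn * (δ - ε / 4)) / qn1 ^ τmin) / Real.exp (qn * ε / 4)
      ≤ (∏ ℓ, |qn * (θ - θl ℓ) - round (qn * (θ - θl ℓ))| ^ τ ℓ) / qn ^ (∑ ℓ, τ ℓ) :=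
    div_le_div₀ (le_of_lt (lt_of_lt_of_le hE1 (le_of_lt hprod))) (le_of_lt hprod) hS hlarge2
  have step4 : (Real.exp (qn * (δ - ε / 4)) / qn1 ^ τmin) / Real.exp (qn * ε / 4)
      = Real.exp (qn * (δ - ε / 2)) / qn1 ^ τmin := by
    rw [div_div, mul_comm (qn1 ^ τmin) (Real.exp (qn * ε / 4)), ← div_div, ← Real.exp_sub]
    congr 2
    ring
  have step5 : (∏ ℓ, |qn * (θ - θl ℓ) - round (qn * (θ - θl ℓ))| ^ τ ℓ) / qn ^ (∑ ℓ, τ ℓ)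
      ≤ ∏ ℓ, |Real.sin (π * (θ - θl ℓ + j ℓ * α))| ^ τ ℓ := step2 ▸ step1
  rw [ge_iff_le, ← step4]
  exact step3.trans step5
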